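/- Let R = k[x,y,z]/(xy − z², x² − yz) for a field k, and let 𝔭 = (x̄, z̄) where bars denote images in R. Then 𝔭 is a prime ideal of R and the ideal quotient (𝔭² : 𝔭) equals the maximal ideal (x̄, ȳ, z̄). -/

import Mathlib

open MvPolynomial

section Aux
variable {k : Type*} [Field k]

lemma auxX_mem (i : Fin 3) : (X i : MvPolynomial (Fin 3) k) ∈ Ideal.span {X 0, X 1, X 2} := by
  fin_cases i <;> exact Ideal.subset_span (by simp)

lemma aux_sub_C (f : MvPolynomial (Fin 3) k) :
    f - C (constantCoeff f) ∈ Ideal.span {X 0, X 1, X 2} := by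
  induction f using MvPolynomial.induction_on with
  | C a => simp
  | add p q hp hq =>
      have := add_mem hp hq
      rw [map_add, map_add] at *
      convert this using 1; ring
  | mul_X p i hp =>
      rw [map_mul, constantCoeff_X, mul_zero, map_zero, sub_zero]
      exact Ideal.mul_mem_left _ _ (auxX_mem i)

lemma aux_span_eq_ker :
    (Ideal.span {X 0, X 1, X 2} : Ideal (MvPolynomial (Fin 3) k)) =
      RingHom.ker (constantCoeff : MvPolynomial (Fin 3) k →+* k) := by
  apply le_antisymm
  · rw [Ideal.span_le]
    rintro x hx
    simp only [Set.mem_insert_iff, Set.mem_singleton_iff] at hx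
    rcases hx with rfl | rfl | rfl <;> simp [RingHom.mem_ker]
  · intro f hf
    rw [RingHom.mem_ker] at hf
    have := aux_sub_C (k := k) f
    rwa [hf, map_zero, sub_zero] at this

noncomputable def auxφ : MvPolynomial (Fin 3) k →ₐ[k] MvPolynomial (Fin 3) k :=
  aeval ![0, X 1, 0]

lemma aux_sub_phi (f : MvPolynomial (Fin 3) k) :
    f - auxφ f ∈ Ideal.span {X 0, X 2} := by
  induction f using MvPolynomial.induction_on with
  | C a => simp [auxφ]
  | add p q hp hq =>
      have := add_mem hp hq
      rw [map_add]
      convert this using 1; ring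
  | mul_X p i hp =>
      rw [map_mul]
      have key : p * X i - auxφ p * auxφ (X i) =
          (p - auxφ p) * X i + auxφ p * (X i - auxφ (X i)) := by ring
      rw [key]
      refine add_mem (Ideal.mul_mem_right _ _ hp) ?_
      fin_cases i <;> simp [auxφ, aeval_X] <;>
        exact Ideal.mul_mem_left _ _ (Ideal.subset_span (by simp))

lemma aux_coeff_single_mul {m n : MvPolynomial (Fin 3) k}
    (hm : constantCoeff m = 0) (hn : constantCoeff n = 0) (i : Fin 3) :
    coeff (Finsupp.single i 1) (m * n) = 0 := by
  rw [coeff_mul]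
  apply Finset.sum_eq_zero
  intro x hx
  rw [Finset.HasAntidiagonal.mem_antidiagonal] at hx
  obtain ⟨a, b⟩ := x
  have happ : ∀ j, a j + b j = (Finsupp.single i 1 : Fin 3 →₀ ℕ) j := fun j => by
    rw [← hx]; rfl
  have key : a = 0 ∨ b = 0 := by
    by_cases hai : a i = 0
    · left; ext j
      show a j = 0
      rcases eq_or_ne j i with rfl | hji
      · exact hai
      · have := happ j; rw [Finsupp.single_apply, if_neg (Ne.symm hji)] at this; omega
    · right; ext j
      show b j = 0
      rcases eq_or_ne j i with rfl | hji
      · have := happ j; rw [Finsupp.single_apply, if_pos rfl] at this; omega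
      · have := happ j; rw [Finsupp.single_apply, if_neg (Ne.symm hji)] at this; omega
  rcases key with rfl | rfl
  · have h0 : coeff (0 : Fin 3 →₀ ℕ) m = 0 := hm
    simp [h0]
  · have h0 : coeff (0 : Fin 3 →₀ ℕ) n = 0 := hn
    simp [h0]

lemma aux_MM {g : MvPolynomial (Fin 3) k}
    (hg : g ∈ (Ideal.span {X 0, X 1, X 2} : Ideal (MvPolynomial (Fin 3) k)) *
      Ideal.span {X 0, X 1, X 2}) (i : Fin 3) :
    coeff (Finsupp.single i 1) g = 0 := by
  have cc0 : ∀ m ∈ (Ideal.span {X 0, X 1, X 2} : Ideal (MvPolynomial (Fin 3) k)),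
      constantCoeff m = 0 := by
    intro m hm
    rw [aux_span_eq_ker] at hm
    exact hm
  refine Submodule.mul_induction_on hg ?_ ?_
  · intro m hm n hn
    exact aux_coeff_single_mul (cc0 m hm) (cc0 n hn) i
  · intro x y hx hy
    rw [coeff_add, hx, hy, add_zero]

end Aux

set_option maxHeartbeats 2000000 in
set_option synthInstance.maxHeartbeats 1000000 in
open MvPolynomial in
theorem stmt6 (k : Type*) [Field k]
    (I : Ideal (MvPolynomial (Fin 3) k))
    (hI : I = Ideal.span {X 0 * X 1 - X 2 ^ 2, X 0 ^ 2 - X 1 * X 2})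
    (p : Ideal (MvPolynomial (Fin 3) k ⧸ I))
    (hpdef : p = Ideal.span
      {Ideal.Quotient.mk I (X 0), Ideal.Quotient.mk I (X 2)}) :
    p.IsPrime ∧
    (Ideal.span {Ideal.Quotient.mk I (X 0), Ideal.Quotient.mk I (X 1),
      Ideal.Quotient.mk I (X 2)}).IsMaximal ∧
    Submodule.colon (p ^ 2) p =
      Ideal.span {Ideal.Quotient.mk I (X 0), Ideal.Quotient.mk I (X 1),
        Ideal.Quotient.mk I (X 2)} := by
  have hx0 : Ideal.Quotient.mk I (X 0) ∈ p := hpdef ▸ Ideal.subset_span (by simp)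
  have hx2 : Ideal.Quotient.mk I (X 2) ∈ p := hpdef ▸ Ideal.subset_span (by simp)
  -- prime part
  have hIφ : ∀ a ∈ I, (auxφ (k := k)).toRingHom a = 0 := by
    intro a ha
    rw [hI] at ha
    have hle : Ideal.span {X 0 * X 1 - X 2 ^ 2, X 0 ^ 2 - X 1 * X 2} ≤
        RingHom.ker (auxφ (k := k)).toRingHom := by
      rw [Ideal.span_le]
      rintro x hx
      simp only [Set.mem_insert_iff, Set.mem_singleton_iff] at hx
      rcases hx with rfl | rfl <;> simp [RingHom.mem_ker, auxφ]
    exact hle ha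
  set ψp := Ideal.Quotient.lift I (auxφ (k := k)).toRingHom hIφ with hψp
  have hkerp : RingHom.ker ψp = p := by
    apply le_antisymm
    · intro a ha
      obtain ⟨f, rfl⟩ := Ideal.Quotient.mk_surjective a
      rw [RingHom.mem_ker, hψp, Ideal.Quotient.lift_mk] at ha
      have h2 := aux_sub_phi (k := k) f
      rw [show (auxφ f : MvPolynomial (Fin 3) k) = 0 from ha, sub_zero] at h2
      have h3 : Ideal.Quotient.mk I f ∈ Ideal.map (Ideal.Quotient.mk I) (Ideal.span {X 0, X 2}) :=
        Ideal.mem_map_of_mem _ h2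
      rwa [Ideal.map_span, Set.image_insert_eq, Set.image_singleton, ← hpdef] at h3
    · rw [hpdef, Ideal.span_le]
      rintro x hx
      simp only [Set.mem_insert_iff, Set.mem_singleton_iff] at hx
      rcases hx with rfl | rfl <;>
        · rw [SetLike.mem_coe, RingHom.mem_ker, hψp, Ideal.Quotient.lift_mk]
          simp [auxφ]
  have hprime : p.IsPrime := hkerp ▸ RingHom.ker_isPrime ψp
  -- maximal part
  have hIc : ∀ a ∈ I, (constantCoeff : MvPolynomial (Fin 3) k →+* k) a = 0 := by
    intro a ha
    rw [hI] at ha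
    have hle : Ideal.span {X 0 * X 1 - X 2 ^ 2, X 0 ^ 2 - X 1 * X 2} ≤
        RingHom.ker (constantCoeff : MvPolynomial (Fin 3) k →+* k) := by
      rw [Ideal.span_le]
      rintro x hx
      simp only [Set.mem_insert_iff, Set.mem_singleton_iff] at hx
      rcases hx with rfl | rfl <;> simp [RingHom.mem_ker]
    exact hle ha
  set ψm := Ideal.Quotient.lift I (constantCoeff : MvPolynomial (Fin 3) k →+* k) hIc with hψm
  have hkerm : RingHom.ker ψm = Ideal.span {Ideal.Quotient.mk I (X 0),
      Ideal.Quotient.mk I (X 1), Ideal.Quotient.mk I (X 2)} := by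
    apply le_antisymm
    · intro a ha
      obtain ⟨f, rfl⟩ := Ideal.Quotient.mk_surjective a
      rw [RingHom.mem_ker, hψm, Ideal.Quotient.lift_mk] at ha
      have hfM : f ∈ (Ideal.span {X 0, X 1, X 2} : Ideal (MvPolynomial (Fin 3) k)) := by
        rw [aux_span_eq_ker]; exact ha
      have h3 := Ideal.mem_map_of_mem (Ideal.Quotient.mk I) hfM
      rwa [Ideal.map_span, Set.image_insert_eq, Set.image_insert_eq,
        Set.image_singleton] at h3
    · rw [Ideal.span_le]
      rintro x hx
      simp only [Set.mem_insert_iff, Set.mem_singleton_iff] at hx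
      rcases hx with rfl | rfl | rfl <;>
        · rw [SetLike.mem_coe, RingHom.mem_ker, hψm, Ideal.Quotient.lift_mk]
          simp
  have hsurj : Function.Surjective ψm := by
    intro c
    exact ⟨Ideal.Quotient.mk I (C c), by rw [hψm, Ideal.Quotient.lift_mk]; simp⟩
  have hmax := hkerm ▸ RingHom.ker_isMaximal_of_surjective ψm hsurj
  refine ⟨hprime, hmax, ?_⟩
  -- colon part
  have hpp : ∀ u v : MvPolynomial (Fin 3) k ⧸ I, u ∈ p → v ∈ p → u * v ∈ p ^ 2 := by
    intro u v hu hv; rw [pow_two]; exact Ideal.mul_mem_mul hu hv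
  have hy0 : Ideal.Quotient.mk I (X 1) * Ideal.Quotient.mk I (X 0) ∈ p ^ 2 := by
    have heq : Ideal.Quotient.mk I (X 1) * Ideal.Quotient.mk I (X 0)
        = Ideal.Quotient.mk I (X 2) * Ideal.Quotient.mk I (X 2) := by
      rw [← map_mul, ← map_mul, Ideal.Quotient.eq, hI]
      have h : (X 1 * X 0 - X 2 * X 2 : MvPolynomial (Fin 3) k)
          = X 0 * X 1 - X 2 ^ 2 := by ring
      rw [h]
      exact Ideal.subset_span (by simp)
    rw [heq]; exact hpp _ _ hx2 hx2
  have hy2 : Ideal.Quotient.mk I (X 1) * Ideal.Quotient.mk I (X 2) ∈ p ^ 2 := by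
    have heq : Ideal.Quotient.mk I (X 1) * Ideal.Quotient.mk I (X 2)
        = Ideal.Quotient.mk I (X 0) * Ideal.Quotient.mk I (X 0) := by
      rw [← map_mul, ← map_mul, Ideal.Quotient.eq, hI]
      have h : (X 1 * X 2 - X 0 * X 0 : MvPolynomial (Fin 3) k)
          = -(X 0 ^ 2 - X 1 * X 2) := by ring
      rw [h]
      exact neg_mem (Ideal.subset_span (by simp))
    rw [heq]; exact hpp _ _ hx0 hx0
  apply le_antisymm
  · -- colon ≤ m
    intro a ha
    obtain ⟨f, rfl⟩ := Ideal.Quotient.mk_surjective a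
    have hfx : Ideal.Quotient.mk I f * Ideal.Quotient.mk I (X 0) ∈ p ^ 2 := by
      have := Submodule.mem_colon.mp ha _ hx0
      rwa [smul_eq_mul] at this
    have hp2 : p ^ 2 = Ideal.map (Ideal.Quotient.mk I) (Ideal.span {X 0, X 2} ^ 2) := by
      rw [Ideal.map_pow, Ideal.map_span, Set.image_insert_eq, Set.image_singleton, ← hpdef]
    have hcm : Ideal.comap (Ideal.Quotient.mk I) (p ^ 2) = Ideal.span {X 0, X 2} ^ 2 ⊔ I := by
      rw [hp2, Ideal.comap_map_of_surjective _ Ideal.Quotient.mk_surjective]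
      congr 1
      exact Ideal.mk_ker
    have hmem : f * X 0 ∈ Ideal.span {X 0, X 2} ^ 2 ⊔ I := by
      rw [← hcm, Ideal.mem_comap, map_mul]
      exact hfx
    have hle : Ideal.span {X 0, X 2} ^ 2 ⊔ I ≤
        (Ideal.span {X 0, X 1, X 2} : Ideal (MvPolynomial (Fin 3) k)) *
          Ideal.span {X 0, X 1, X 2} := by
      apply sup_le
      · rw [pow_two]
        have hPM : (Ideal.span {X 0, X 2} : Ideal (MvPolynomial (Fin 3) k)) ≤
            Ideal.span {X 0, X 1, X 2} := by
          rw [Ideal.span_le]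
          rintro x hx
          simp only [Set.mem_insert_iff, Set.mem_singleton_iff] at hx
          rcases hx with rfl | rfl <;> exact Ideal.subset_span (by simp)
        exact mul_le_mul' hPM hPM
      · rw [hI, Ideal.span_le]
        rintro x hx
        simp only [Set.mem_insert_iff, Set.mem_singleton_iff] at hx
        have m0 : (X 0 : MvPolynomial (Fin 3) k) ∈ Ideal.span {X 0, X 1, X 2} :=
          Ideal.subset_span (by simp)
        have m1 : (X 1 : MvPolynomial (Fin 3) k) ∈ Ideal.span {X 0, X 1, X 2} :=
          Ideal.subset_span (by simp)
        have m2 : (X 2 : MvPolynomial (Fin 3) k) ∈ Ideal.span {X 0, X 1, X 2} :=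
          Ideal.subset_span (by simp)
        rcases hx with rfl | rfl
        · refine sub_mem (Ideal.mul_mem_mul m0 m1) ?_
          rw [pow_two]; exact Ideal.mul_mem_mul m2 m2
        · refine sub_mem ?_ (Ideal.mul_mem_mul m1 m2)
          rw [pow_two]; exact Ideal.mul_mem_mul m0 m0
    have hcoeff := aux_MM (hle hmem) 0
    have hcc : constantCoeff f = 0 := by
      rw [show (Finsupp.single (0 : Fin 3) 1) = 0 + Finsupp.single (0 : Fin 3) 1 by
        rw [zero_add], coeff_mul_X] at hcoeff
      exact hcoeff
    have hfM : f ∈ (Ideal.span {X 0, X 1, X 2} : Ideal (MvPolynomial (Fin 3) k)) := by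
      rw [aux_span_eq_ker]; exact hcc
    have h3 := Ideal.mem_map_of_mem (Ideal.Quotient.mk I) hfM
    rwa [Ideal.map_span, Set.image_insert_eq, Set.image_insert_eq,
      Set.image_singleton] at h3
  · -- m ≤ colon
    rw [Ideal.span_le]
    intro g hg
    simp only [Set.mem_insert_iff, Set.mem_singleton_iff] at hg
    rw [SetLike.mem_coe, Submodule.mem_colon]
    intro x hxp
    rw [smul_eq_mul]
    rw [hpdef] at hxp
    induction hxp using Submodule.span_induction with
    | mem y hy =>
        simp only [Set.mem_insert_iff, Set.mem_singleton_iff] at hy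
        rcases hg with rfl | rfl | rfl <;> rcases hy with rfl | rfl
        · exact hpp _ _ hx0 hx0
        · exact hpp _ _ hx0 hx2
        · exact hy0
        · exact hy2
        · exact hpp _ _ hx2 hx0
        · exact hpp _ _ hx2 hx2
    | zero => rw [mul_zero]; exact zero_mem _
    | add y z _ _ hy hz => rw [mul_add]; exact add_mem hy hz
    | smul r y _ hy =>
        rw [smul_eq_mul, mul_left_comm]
        exact Ideal.mul_mem_left _ _ hy
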